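/- For any η ∈ (0,1] and any α ∈ [0,1], the quantity g(α) = α + (1/η)·ln(1 − α + α·e^{-η}) satisfies g(α) ≤ (e−2)·η·min{α, 1−α}. -/

import Mathlib

open Real

-- exp(-η) ≤ 1 - η + η²/2 for η ≥ 0
lemma exp_neg_le_quad {η : ℝ} (hη : 0 ≤ η) :
    Real.exp (-η) ≤ 1 - η + η ^ 2 / 2 := by
  have h1 : 1 + η + η ^ 2 / 2 ≤ Real.exp η := by
    have h := Real.sum_le_exp_of_nonneg hη 3
    simp [Finset.sum_range_succ] at h
    nlinarith [h]
  have hpos : (0:ℝ) < 1 + η + η ^ 2 / 2 := by nlinarith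
  have hexp : (0:ℝ) < Real.exp η := Real.exp_pos η
  have h2 : Real.exp (-η) ≤ 1 / (1 + η + η ^ 2 / 2) := by
    rw [Real.exp_neg, inv_eq_one_div]
    exact one_div_le_one_div_of_le hpos h1
  refine h2.trans ?_
  rw [div_le_iff₀ hpos]
  nlinarith [pow_nonneg hη 4]

-- exp x ≤ 1 + x + (e-2) x² on [0,1]
lemma exp_le_quad {x : ℝ} (h0 : 0 ≤ x) (h1 : x ≤ 1) :
    Real.exp x ≤ 1 + x + (Real.exp 1 - 2) * x ^ 2 := by
  have key : ∀ y : ℝ, Real.exp y = (∑ i ∈ Finset.range 2, y ^ i / i.factorial)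
      + ∑' n : ℕ, y ^ (n + 2) / (n + 2).factorial := by
    intro y
    have hs := Real.summable_pow_div_factorial y
    have := hs.sum_add_tsum_nat_add 2
    rw [Real.exp_eq_exp_ℝ, NormedSpace.exp_eq_tsum_div]
    exact this.symm
  have hsum2 : ∀ y : ℝ, Summable (fun n : ℕ => y ^ (n + 2) / (n + 2).factorial) :=
    fun y => (Real.summable_pow_div_factorial y).comp_injective (add_left_injective 2)
  have hle : ∑' n : ℕ, x ^ (n + 2) / (n + 2).factorial
      ≤ x ^ 2 * ∑' n : ℕ, (1:ℝ) ^ (n + 2) / (n + 2).factorial := by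
    rw [← tsum_mul_left]
    refine Summable.tsum_le_tsum (fun n => ?_) (hsum2 x) ((hsum2 1).mul_left _)
    rw [one_pow, mul_one_div]
    have hfac : (0:ℝ) < (n + 2).factorial := by positivity
    refine (div_le_div_iff_of_pos_right hfac).mpr ?_
    calc x ^ (n + 2) = x ^ 2 * x ^ n := by ring
      _ ≤ x ^ 2 * 1 := by
          have := pow_le_one₀ h0 h1 (n := n)
          nlinarith [sq_nonneg x]
      _ = x ^ 2 := mul_one _
  have h2 : ∑' n : ℕ, (1:ℝ) ^ (n + 2) / (n + 2).factorial = Real.exp 1 - 2 := by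
    have := key 1
    simp [Finset.sum_range_succ] at this ⊢
    linarith [this]
  have hx := key x
  simp [Finset.sum_range_succ] at hx
  rw [h2] at hle
  nlinarith [hle, hx]

theorem binary_mixability_gap (η α : ℝ) (hη : η ∈ Set.Ioc (0:ℝ) 1)
    (hα : α ∈ Set.Icc (0:ℝ) 1) :
    α + (1/η) * Real.log (1 - α + α * Real.exp (-η)) ≤
      (Real.exp 1 - 2) * η * min α (1 - α) := by
  obtain ⟨hη0, hη1⟩ := hη
  obtain ⟨hα0, hα1⟩ := hα
  have hen : (0:ℝ) < Real.exp (-η) := Real.exp_pos _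
  have hen1 : Real.exp (-η) ≤ 1 := Real.exp_le_one_iff.mpr (by linarith)
  have hP : 0 < 1 - α + α * Real.exp (-η) := by nlinarith
  have he2 : (1:ℝ)/2 ≤ Real.exp 1 - 2 := by
    have := Real.exp_one_gt_d9; linarith
  have hb1 : α + (1/η) * Real.log (1 - α + α * Real.exp (-η)) ≤ (Real.exp 1 - 2) * η * α := by
    have hlog : Real.log (1 - α + α * Real.exp (-η)) ≤ α * (Real.exp (-η) - 1) := by
      have := Real.log_le_sub_one_of_pos hP
      linarith
    have hq := exp_neg_le_quad hη0.le
    have h1η : 0 < 1/η := by positivity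
    calc α + (1/η) * Real.log (1 - α + α * Real.exp (-η))
        ≤ α + (1/η) * (α * (Real.exp (-η) - 1)) := by nlinarith
      _ ≤ α + (1/η) * (α * (-η + η ^ 2 / 2)) := by
          apply add_le_add_right
          apply mul_le_mul_of_nonneg_left ?_ h1η.le
          nlinarith
      _ = α * η / 2 := by field_simp; ring
      _ ≤ (Real.exp 1 - 2) * η * α := by
          nlinarith [mul_nonneg (mul_nonneg (by linarith : (0:ℝ) ≤ Real.exp 1 - 2 - 1/2) hη0.le) hα0]
  have hb2 : α + (1/η) * Real.log (1 - α + α * Real.exp (-η)) ≤ (Real.exp 1 - 2) * η * (1 - α) := by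
    set Q : ℝ := Real.exp η * (1 - α) + α with hQdef
    have hQpos : 0 < Q := by
      have := Real.one_le_exp hη0.le
      nlinarith
    have hfact : 1 - α + α * Real.exp (-η) = Real.exp (-η) * Q := by
      rw [hQdef, Real.exp_neg]
      have := (Real.exp_pos η).ne'
      field_simp
    have hlogP : Real.log (1 - α + α * Real.exp (-η)) = -η + Real.log Q := by
      rw [hfact, Real.log_mul (Real.exp_pos _).ne' hQpos.ne', Real.log_exp]
    have hlogQ : Real.log Q ≤ (1 - α) * (Real.exp η - 1) := by
      have := Real.log_le_sub_one_of_pos hQpos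
      rw [hQdef] at this ⊢
      nlinarith
    have hexpb : Real.exp η - 1 ≤ η + (Real.exp 1 - 2) * η ^ 2 :=
      by have := exp_le_quad hη0.le hη1; linarith
    have h1η : 0 < 1/η := by positivity
    have hkey : Real.log Q ≤ (1 - α) * (η + (Real.exp 1 - 2) * η ^ 2) := by
      refine hlogQ.trans ?_
      apply mul_le_mul_of_nonneg_left hexpb (by linarith)
    calc α + (1/η) * Real.log (1 - α + α * Real.exp (-η))
        = α - 1 + (1/η) * Real.log Q := by rw [hlogP]; field_simp; ring
      _ ≤ α - 1 + (1/η) * ((1 - α) * (η + (Real.exp 1 - 2) * η ^ 2)) := by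
          apply add_le_add_right
          exact mul_le_mul_of_nonneg_left hkey h1η.le
      _ = (Real.exp 1 - 2) * η * (1 - α) := by field_simp; ring
  rcases le_total α (1 - α) with h | h
  · rw [min_eq_left h]; exact hb1
  · rw [min_eq_right h]; exact hb2
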